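/- With the same Whitney-type decomposition of the Hölder-$\alpha$ graph domain $\Omega_\varphi$ as above, the number $\mathbb{W}_i(t)$ of cubes of edge $2^{-i}$ in the shadow of a cube $Q_t$ of edge $2^{-k}$ (i.e., among $\{r\succeq t\}$) satisfies $\mathbb{W}_i(t) \le C\, 2^{-k(n-1)}\,2^{-i(\alpha-n)}$ for $i\ge k$, with $C$ depending only on $n,\alpha,K$. -/

import Mathlib

open scoped Classical

noncomputable section

/-- `s ⪯ t` in the rooted tree with parent map `par`: `s` lies on the path from the root to `t`. -/
def treeLe {Γ : Type*} (par : Γ → Γ) (s t : Γ) : Prop := ∃ m : ℕ, par^[m] t = s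

/-- The expanded Hölder graph domain `Ω_{φ,E}`. -/
def OmegaE (n : ℕ) (φ : (Fin (n - 1) → ℝ) → ℝ) : Set ((Fin (n - 1) → ℝ) × ℝ) :=
  {x | (∀ i, |x.1 i| < 3 / 2) ∧ 0 < x.2 ∧ x.2 < φ x.1}

/-- The tripled upward-translated cube `3(Q + ℓ eₙ)` of the cube with lower corner
`(c, y)` and edge `ℓ`. -/
def tripled (n : ℕ) (c : Fin (n - 1) → ℝ) (y ℓ : ℝ) : Set ((Fin (n - 1) → ℝ) × ℝ) :=
  {x | (∀ i, c i - ℓ < x.1 i ∧ x.1 i < c i + 2 * ℓ) ∧ y < x.2 ∧ x.2 < y + 3 * ℓ}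

/-- The Whitney-type tree decomposition of the Hölder graph domain
`Ω_φ = (-1/2,1/2)^{n-1} × (0,φ)`, built level by level from the root cube
`(-1/2,1/2)^{n-1} × (0,1)`: a cube either is translated upward unchanged (when the tripled
translated cube fits in the expanded domain `Ω_{φ,E}`) or is split into `2^{n-1}` children of
half the edge length.  Each vertex `t` carries a cube of edge `2^{-lvl t}` with base lower
corner `corner t` and bottom height `height t`. -/
structure WhitneyTree (n : ℕ) (φ : (Fin (n - 1) → ℝ) → ℝ) where
  Γ : Type
  countable : Countable Γ
  a : Γ
  par : Γ → Γ
  par_root : par a = a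
  reaches : ∀ t, ∃ m : ℕ, par^[m] t = a
  lvl : Γ → ℕ
  corner : Γ → Fin (n - 1) → ℝ
  height : Γ → ℝ
  lvl_root : lvl a = 0
  corner_root : ∀ i, corner a i = -(1 / 2)
  height_root : height a = 0
  child_translate : ∀ t, t ≠ a →
    tripled n (corner (par t)) (height (par t)) ((2 : ℝ) ^ (-(lvl (par t) : ℤ))) ⊆ OmegaE n φ →
    lvl t = lvl (par t) ∧ corner t = corner (par t) ∧
      height t = height (par t) + (2 : ℝ) ^ (-(lvl (par t) : ℤ))
  child_split : ∀ t, t ≠ a →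
    ¬ tripled n (corner (par t)) (height (par t)) ((2 : ℝ) ^ (-(lvl (par t) : ℤ))) ⊆ OmegaE n φ →
    lvl t = lvl (par t) + 1 ∧
      (∀ i, corner t i = corner (par t) i ∨
        corner t i = corner (par t) i + (2 : ℝ) ^ (-(lvl t : ℤ))) ∧
      height t = height (par t) + (2 : ℝ) ^ (-(lvl (par t) : ℤ))
  below_graph : ∀ t (x' : Fin (n - 1) → ℝ),
    (∀ i, corner t i ≤ x' i ∧ x' i ≤ corner t i + (2 : ℝ) ^ (-(lvl t : ℤ))) →
    height t + (2 : ℝ) ^ (-(lvl t : ℤ)) ≤ φ x'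
  cube_inj : ∀ s t, lvl s = lvl t → corner s = corner t → height s = height t → s = t


namespace WhitneyAux

variable {n : ℕ} {φ : (Fin (n - 1) → ℝ) → ℝ}

lemma two_zpow_pos (m : ℤ) : (0:ℝ) < 2 ^ m := zpow_pos (by norm_num) m

lemma two_zpow_le_one {m : ℕ} : (2:ℝ) ^ (-(m:ℤ)) ≤ 1 := by
  calc (2:ℝ) ^ (-(m:ℤ)) ≤ 2 ^ (0:ℤ) := zpow_le_zpow_right₀ one_le_two (by omega)
  _ = 1 := by norm_num

lemma zpow_succ_level (l : ℕ) : (2:ℝ) ^ (-(l:ℤ)) = 2 * 2 ^ (-((l+1:ℕ):ℤ)) := by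
  rw [show (-(l:ℤ)) = 1 + (-((l+1:ℕ):ℤ)) by push_cast; ring, zpow_add₀ (by norm_num : (2:ℝ) ≠ 0)]
  norm_num

/-- Basic invariant: nonnegative dyadic heights and corner bounds. -/
lemma basic_inv (T : WhitneyTree n φ) (s : T.Γ) :
    0 ≤ T.height s ∧
    (∀ j, -(1/2) ≤ T.corner s j ∧ T.corner s j + (2:ℝ)^(-(T.lvl s:ℤ)) ≤ 1/2) ∧
    (∃ m : ℤ, T.height s = m * (2:ℝ)^(-(T.lvl s:ℤ))) := by
  obtain ⟨m, hm⟩ := T.reaches s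
  induction m generalizing s with
  | zero =>
    simp only [Function.iterate_zero, id_eq] at hm
    subst hm
    refine ⟨le_of_eq T.height_root.symm, fun j => ?_, 0, by simp [T.height_root]⟩
    rw [T.corner_root, T.lvl_root]
    norm_num
  | succ m ih =>
    by_cases hsa : s = T.a
    · subst hsa
      refine ⟨le_of_eq T.height_root.symm, fun j => ?_, 0, by simp [T.height_root]⟩
      rw [T.corner_root, T.lvl_root]
      norm_num
    · rw [Function.iterate_succ_apply] at hm
      obtain ⟨hh0, hcb, mz, hdy⟩ := ih (T.par s) hm
      set p := T.par s with hp
      by_cases hfit : tripled n (T.corner p) (T.height p) ((2:ℝ) ^ (-(T.lvl p:ℤ))) ⊆ OmegaE n φ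
      · obtain ⟨hl, hc, hh⟩ := T.child_translate s hsa hfit
        refine ⟨?_, ?_, mz + 1, ?_⟩
        · rw [hh]
          have := two_zpow_pos (-(T.lvl (T.par s):ℤ))
          linarith
        · intro j; rw [hc, hl]; exact hcb j
        · rw [hh, hl, hdy]; push_cast; ring
      · obtain ⟨hl, hc, hh⟩ := T.child_split s hsa hfit
        have hps : (2:ℝ) ^ (-(T.lvl p:ℤ)) = 2 * 2 ^ (-(T.lvl s:ℤ)) := by
          rw [hl]; exact zpow_succ_level (T.lvl p)
        refine ⟨?_, ?_, 2 * mz + 2, ?_⟩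
        · rw [hh]
          have := two_zpow_pos (-(T.lvl p:ℤ))
          linarith
        · intro j
          have hspos := (two_zpow_pos (-(T.lvl s:ℤ)))
          rcases hc j with h | h <;> rw [h] <;> constructor
          · exact (hcb j).1
          · have := (hcb j).2; rw [hps] at this; linarith
          · have := (hcb j).1; linarith
          · have := (hcb j).2; rw [hps] at this; linarith
        · rw [hh, hdy, hps]; push_cast; ring

/-- Height plus edge is below the graph over the corner. -/
lemma height_top_le (T : WhitneyTree n φ) (s : T.Γ) :
    T.height s + (2:ℝ)^(-(T.lvl s:ℤ)) ≤ φ (T.corner s) := by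
  apply T.below_graph s (T.corner s)
  intro j
  exact ⟨le_refl _, by have := (two_zpow_pos (-(T.lvl s:ℤ))).le; linarith⟩

/-- Descent lemma: near any level-`i` cube (with `i ≥ 1`) there is a point where `φ`
is not much above the bottom of the cube. -/
lemma descent (T : WhitneyTree n φ) (i : ℕ) (hi : 1 ≤ i) (r : T.Γ) (hr : T.lvl r = i) :
    ∃ x'' : Fin (n-1) → ℝ, (∀ j, |x'' j| < 3/2) ∧
      (∀ j, |x'' j - T.corner r j| ≤ 5 * 2^(-(i:ℤ))) ∧
      φ x'' < T.height r + 4 * 2^(-(i:ℤ)) := by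
  obtain ⟨m, hm⟩ := T.reaches r
  induction m generalizing r with
  | zero =>
    simp only [Function.iterate_zero, id_eq] at hm
    subst hm
    rw [T.lvl_root] at hr
    omega
  | succ m ih =>
    have hε := two_zpow_pos (-(i:ℤ))
    have hra : r ≠ T.a := by
      intro h; subst h; rw [T.lvl_root] at hr; omega
    rw [Function.iterate_succ_apply] at hm
    by_cases hfit : tripled n (T.corner (T.par r)) (T.height (T.par r))
        ((2:ℝ) ^ (-(T.lvl (T.par r):ℤ))) ⊆ OmegaE n φ
    · obtain ⟨hl, hc, hh⟩ := T.child_translate r hra hfit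
      obtain ⟨x'', hbox, hdist, hval⟩ := ih (T.par r) (hl.symm.trans hr) hm
      refine ⟨x'', hbox, fun j => by rw [hc]; exact hdist j, ?_⟩
      rw [hh]
      have := two_zpow_pos (-(T.lvl (T.par r):ℤ))
      linarith
    · obtain ⟨hl, hc, hh⟩ := T.child_split r hra hfit
      have hlp : T.lvl (T.par r) + 1 = i := by omega
      have hps : (2:ℝ) ^ (-(T.lvl (T.par r):ℤ)) = 2 * 2 ^ (-(i:ℤ)) := by
        rw [← hlp]; exact zpow_succ_level (T.lvl (T.par r))
      obtain ⟨x, hxin, hxout⟩ := Set.not_subset.mp hfit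
      obtain ⟨hx1, hx2lo, hx2hi⟩ := hxin
      obtain ⟨_, hcb, -⟩ := basic_inv T (T.par r)
      have hh0 : 0 ≤ T.height (T.par r) := (basic_inv T (T.par r)).1
      have hle1 : (2:ℝ) ^ (-(T.lvl (T.par r):ℤ)) ≤ 1 := two_zpow_le_one
      have hbox : ∀ j, |x.1 j| < 3/2 := by
        intro j
        have h1 := (hx1 j).1
        have h2 := (hx1 j).2
        have h3 := (hcb j).1
        have h4 := (hcb j).2
        have h5 := two_zpow_pos (-(T.lvl (T.par r):ℤ))
        rw [abs_lt]
        constructor <;> linarith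
      have hφx : φ x.1 ≤ x.2 := by
        simp only [OmegaE, Set.mem_setOf_eq, not_and, not_lt] at hxout
        exact hxout hbox (lt_of_le_of_lt hh0 hx2lo)
      refine ⟨x.1, hbox, fun j => ?_, ?_⟩
      · have h1 := (hx1 j).1
        have h2 := (hx1 j).2
        rw [hps] at h1 h2
        have hcr := hc j
        rw [hr] at hcr
        rw [abs_le]
        rcases hcr with h | h <;> rw [h] <;> constructor <;> linarith
      · rw [hh, hps]
        have : φ x.1 < T.height (T.par r) + 3 * (2 * 2^(-(i:ℤ))) := by
          rw [← hps]; linarith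
        linarith

/-- Relative invariant along the subtree of `t`. -/
lemma rel_inv (T : WhitneyTree n φ) (t r : T.Γ) (h : treeLe T.par t r) :
    T.lvl t ≤ T.lvl r ∧ ∀ j,
      (∃ m : ℕ, T.corner r j = T.corner t j + m * (2:ℝ)^(-(T.lvl r:ℤ))) ∧
      T.corner r j + (2:ℝ)^(-(T.lvl r:ℤ)) ≤ T.corner t j + (2:ℝ)^(-(T.lvl t:ℤ)) := by
  obtain ⟨m, hm⟩ := h
  induction m generalizing r with
  | zero =>
    simp only [Function.iterate_zero, id_eq] at hm
    subst hm
    exact ⟨le_refl _, fun j => ⟨⟨0, by push_cast; ring⟩, le_refl _⟩⟩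
  | succ m ih =>
    by_cases hra : r = T.a
    · have : t = T.a := by
        rw [hra, Function.iterate_fixed T.par_root] at hm
        exact hm.symm
      rw [hra, this]
      exact ⟨le_refl _, fun j => ⟨⟨0, by push_cast; ring⟩, le_refl _⟩⟩
    · rw [Function.iterate_succ_apply] at hm
      obtain ⟨hlvl, hcor⟩ := ih (T.par r) hm
      by_cases hfit : tripled n (T.corner (T.par r)) (T.height (T.par r))
          ((2:ℝ) ^ (-(T.lvl (T.par r):ℤ))) ⊆ OmegaE n φ
      · obtain ⟨hl, hc, -⟩ := T.child_translate r hra hfit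
        rw [hl, hc]
        exact ⟨hlvl, hcor⟩
      · obtain ⟨hl, hc, -⟩ := T.child_split r hra hfit
        have hps : (2:ℝ) ^ (-(T.lvl (T.par r):ℤ)) = 2 * 2 ^ (-(T.lvl r:ℤ)) := by
          rw [hl]; exact zpow_succ_level (T.lvl (T.par r))
        refine ⟨by omega, fun j => ?_⟩
        obtain ⟨⟨mc, hmc⟩, hub⟩ := hcor j
        have hεr := two_zpow_pos (-(T.lvl r:ℤ))
        rcases hc j with h | h
        · refine ⟨⟨2 * mc, by rw [h, hmc, hps]; push_cast; ring⟩, ?_⟩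
          rw [h]
          rw [hps] at hub
          linarith
        · refine ⟨⟨2 * mc + 1, by rw [h, hmc, hps]; push_cast; ring⟩, ?_⟩
          rw [h]
          rw [hps] at hub
          linarith

/-- Two same-level cubes over the same column have heights within `M·2^{-iα}`. -/
lemma height_pair (α K : ℝ) (hα : 0 < α) (hα1 : α ≤ 1) (hK : 0 < K)
    (hφH : ∀ x y : Fin (n - 1) → ℝ, (∀ i, |x i| < 3 / 2) → (∀ i, |y i| < 3 / 2) →
      |φ x - φ y| ≤ K * dist x y ^ α)
    (hφub : ∀ x, φ x < 3)
    (T : WhitneyTree n φ) (i : ℕ) (r r' : T.Γ)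
    (hr : T.lvl r = i) (hr' : T.lvl r' = i) (hc : T.corner r = T.corner r') :
    T.height r' - T.height r ≤ (K * 5 ^ α + 3) * (2:ℝ) ^ (-(i:ℝ) * α) := by
  have h5α : (0:ℝ) < 5 ^ α := Real.rpow_pos_of_pos (by norm_num) α
  rcases Nat.eq_zero_or_pos i with hi0 | hi
  · subst hi0
    have h1 : T.height r' + (2:ℝ)^(-(T.lvl r':ℤ)) ≤ φ (T.corner r') := height_top_le T r'
    rw [hr'] at h1
    norm_num at h1 ⊢
    have h2 := (basic_inv T r).1
    have h3 := hφub (T.corner r')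
    nlinarith
  · set εr : ℝ := (2:ℝ)^(-(i:ℤ)) with hεdef
    have hε : (0:ℝ) < εr := two_zpow_pos _
    set ρ : ℝ := (2:ℝ)^(-(i:ℝ) * α) with hρdef
    have hεrpow : εr = (2:ℝ) ^ (-(i:ℝ)) := by
      rw [hεdef, ← Real.rpow_intCast 2 (-(i:ℤ))]
      norm_num
    have key1 : (5*εr)^α = 5^α * ρ := by
      rw [Real.mul_rpow (by norm_num) hε.le, hεrpow, hρdef,
        ← Real.rpow_mul (by norm_num)]
    have key2 : εr ≤ ρ := by
      rw [hεrpow]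
      apply Real.rpow_le_rpow_of_exponent_le one_le_two
      have : (0:ℝ) ≤ (i:ℝ) := Nat.cast_nonneg i
      push_cast
      nlinarith
    obtain ⟨x'', hbox, hdist, hval⟩ := descent T i hi r hr
    have htop : T.height r' + εr ≤ φ (T.corner r') := by
      have := height_top_le T r'
      rwa [hr'] at this
    have hboxc : ∀ j, |T.corner r' j| < 3/2 := by
      intro j
      obtain ⟨h1, h2⟩ := (basic_inv T r').2.1 j
      have := two_zpow_pos (-(T.lvl r':ℤ))
      rw [abs_lt]
      constructor <;> linarith
    have hdist' : dist x'' (T.corner r') ≤ 5 * εr := by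
      rw [dist_pi_le_iff (by positivity)]
      intro j
      rw [Real.dist_eq, ← hc]
      exact hdist j
    have hHol := hφH x'' (T.corner r') hbox hboxc
    have hrp : K * dist x'' (T.corner r') ^ α ≤ K * (5*εr)^α :=
      mul_le_mul_of_nonneg_left (Real.rpow_le_rpow dist_nonneg hdist' hα.le) hK.le
    rw [key1] at hrp
    have habs : φ (T.corner r') - φ x'' ≤ K * dist x'' (T.corner r') ^ α := by
      have := abs_sub_le_iff.mp hHol
      linarith [this.2]
    nlinarith [hval, htop]

end WhitneyAux

theorem stmt15 (n : ℕ) (hn : 2 ≤ n) (α K : ℝ) (hα : 0 < α) (hα1 : α ≤ 1) (hK : 0 < K)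
    (φ : (Fin (n - 1) → ℝ) → ℝ)
    (hφH : ∀ x y : Fin (n - 1) → ℝ, (∀ i, |x i| < 3 / 2) → (∀ i, |y i| < 3 / 2) →
      |φ x - φ y| ≤ K * dist x y ^ α)
    (hφlb : ∀ x, 2 ≤ φ x) (hφub : ∀ x, φ x < 3) :
    ∃ C : ℝ, 0 < C ∧
      ∀ (T : WhitneyTree n φ) (t : T.Γ) (k i : ℕ), T.lvl t = k → k ≤ i →
        {r : T.Γ | treeLe T.par t r ∧ T.lvl r = i}.Finite ∧
        (({r : T.Γ | treeLe T.par t r ∧ T.lvl r = i}.ncard : ℝ)) ≤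
          C * 2 ^ (-(k : ℝ) * (n - 1)) * 2 ^ (-(i : ℝ) * (α - n)) := by
  classical
  have h5α : (0:ℝ) < 5 ^ α := Real.rpow_pos_of_pos (by norm_num) α
  set M : ℝ := K * 5 ^ α + 3 with hMdef
  have hM : 0 < M := by positivity
  refine ⟨2 * M + 3, by positivity, ?_⟩
  intro T t k i hk hki
  set S := {r : T.Γ | treeLe T.par t r ∧ T.lvl r = i} with hSdef
  set ε : ℝ := (2:ℝ)^(-(i:ℤ)) with hεdef
  have hε : (0:ℝ) < ε := WhitneyAux.two_zpow_pos _
  have hpow2 : ε * (2:ℝ)^(i:ℕ) = 1 := by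
    rw [hεdef, ← zpow_natCast (2:ℝ) i, ← zpow_add₀ (by norm_num : (2:ℝ) ≠ 0)]
    norm_num
  have hrec : ∀ (x : ℝ) (m : ℤ), x = m * ε → round (x * (2:ℝ)^(i:ℕ)) = m := by
    intro x m h
    rw [h, mul_assoc, hpow2, mul_one, round_intCast]
  -- corner representation
  have hcornrep : ∀ r ∈ S, ∀ j, ∃ m : ℕ,
      T.corner r j = T.corner t j + (m:ℝ) * ε ∧ (m:ℤ) ≤ 2^(i-k) - 1 := by
    intro r hr j
    obtain ⟨hlvl, hcor⟩ := WhitneyAux.rel_inv T t r hr.1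
    obtain ⟨⟨m, hm⟩, hub⟩ := hcor j
    rw [hr.2] at hm hub
    rw [hk] at hub
    refine ⟨m, hm, ?_⟩
    have h2k : (2:ℝ)^(-(k:ℤ)) = (2:ℝ)^((i-k:ℕ)) * ε := by
      rw [hεdef, ← zpow_natCast (2:ℝ) (i-k), ← zpow_add₀ (by norm_num : (2:ℝ) ≠ 0)]
      congr 1
      push_cast [Nat.cast_sub hki]
      ring
    rw [hm, h2k] at hub
    have hmle : (m:ℝ) + 1 ≤ (2:ℝ)^((i-k:ℕ)) := by
      have := (mul_le_mul_iff_of_pos_right hε).mp (by linarith : ((m:ℝ) + 1) * ε ≤ (2:ℝ)^((i-k:ℕ)) * ε)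
      exact this
    have : (m:ℤ) + 1 ≤ 2^(i-k) := by exact_mod_cast hmle
    omega
  -- height representation
  have hhtrep : ∀ r ∈ S, ∃ m : ℤ, T.height r = (m:ℝ) * ε ∧ 0 ≤ m ∧ m ≤ 3 * 2^i := by
    intro r hr
    obtain ⟨hpos, -, m, hm⟩ := WhitneyAux.basic_inv T r
    rw [hr.2] at hm
    refine ⟨m, hm, ?_, ?_⟩
    · have h0' : (0:ℝ) * ε ≤ (m:ℝ) * ε := by rw [zero_mul, ← hm]; exact hpos
      have := (mul_le_mul_iff_of_pos_right hε).mp h0'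
      exact_mod_cast this
    · have h3 : T.height r + ε ≤ φ (T.corner r) := by
        have := WhitneyAux.height_top_le T r
        rwa [hr.2] at this
      have h4 := hφub (T.corner r)
      have h5 : (3:ℝ) = 3 * 2^(i:ℕ) * ε := by
        rw [mul_assoc, mul_comm ((2:ℝ)^(i:ℕ)) ε, hpow2, mul_one]
      have h6 : (m:ℝ) * ε < 3 * 2^(i:ℕ) * ε := by rw [← h5]; linarith
      have h7 : (m:ℝ) < 3 * 2^(i:ℕ) := lt_of_mul_lt_mul_right h6 hε.le
      have : (m:ℤ) < 3 * 2^i := by exact_mod_cast h7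
      omega
  set F₁ : T.Γ → Fin (n-1) → ℤ :=
    fun r j => round ((T.corner r j - T.corner t j) * (2:ℝ)^(i:ℕ)) with hF₁def
  set F₂ : T.Γ → ℤ := fun r => round (T.height r * (2:ℝ)^(i:ℕ)) with hF₂def
  have hF₁val : ∀ r ∈ S, ∀ j, ∀ m : ℕ, T.corner r j = T.corner t j + (m:ℝ) * ε →
      F₁ r j = (m:ℤ) := by
    intro r _ j m hm
    exact hrec _ _ (by push_cast; linarith)
  have hF₂val : ∀ r (m : ℤ), T.height r = (m:ℝ) * ε → F₂ r = m := by
    intro r m hm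
    exact hrec _ _ hm
  -- injectivity
  have hinj : Set.InjOn (fun r => (F₁ r, F₂ r)) S := by
    intro r hrS r' hrS' heq
    simp only [Prod.mk.injEq] at heq
    have hcor : T.corner r = T.corner r' := by
      funext j
      obtain ⟨m, hm, -⟩ := hcornrep r hrS j
      obtain ⟨m', hm', -⟩ := hcornrep r' hrS' j
      have e1 := hF₁val r hrS j m hm
      have e2 := hF₁val r' hrS' j m' hm'
      have : (m:ℤ) = (m':ℤ) := by rw [← e1, ← e2, heq.1]
      rw [hm, hm']
      have : (m:ℝ) = (m':ℝ) := by exact_mod_cast this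
      rw [this]
    have hht : T.height r = T.height r' := by
      obtain ⟨m, hm, -⟩ := hhtrep r hrS
      obtain ⟨m', hm', -⟩ := hhtrep r' hrS'
      have e1 := hF₂val r m hm
      have e2 := hF₂val r' m' hm'
      have : m = m' := by rw [← e1, ← e2, heq.2]
      rw [hm, hm', this]
    exact T.cube_inj r r' (hrS.2.trans hrS'.2.symm) hcor hht
  -- finiteness
  have himg : (fun r => (F₁ r, F₂ r)) '' S ⊆
      ↑((Fintype.piFinset fun _ : Fin (n-1) => Finset.Icc (0:ℤ) (2^(i-k)-1)) ×ˢ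
        Finset.Icc (0:ℤ) (3*2^i)) := by
    rintro _ ⟨r, hrS, rfl⟩
    simp only [Finset.coe_product, Set.mem_prod, Finset.mem_coe, Fintype.mem_piFinset,
      Finset.mem_Icc]
    constructor
    · intro j
      obtain ⟨m, hm, hub⟩ := hcornrep r hrS j
      rw [hF₁val r hrS j m hm]
      exact ⟨by positivity, hub⟩
    · obtain ⟨m, hm, h0, h3⟩ := hhtrep r hrS
      rw [hF₂val r m hm]
      exact ⟨h0, h3⟩
  have hSfin : S.Finite :=
    Set.Finite.of_finite_image (Set.Finite.subset (Finset.finite_toSet _) himg) hinj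
  refine ⟨hSfin, ?_⟩
  set Sf := hSfin.toFinset with hSfdef
  have hmemSf : ∀ r, r ∈ Sf ↔ r ∈ S := fun r => hSfin.mem_toFinset
  set ρ : ℝ := (2:ℝ)^(-(i:ℝ) * α) with hρdef
  have hρpos : 0 < ρ := Real.rpow_pos_of_pos (by norm_num) _
  set B : ℝ := M * (2:ℝ)^((i:ℝ) * (1-α)) with hBdef
  have hβpos : (0:ℝ) < (2:ℝ)^((i:ℝ) * (1-α)) := Real.rpow_pos_of_pos (by norm_num) _
  have hB : 0 < B := by positivity
  have hεrpow : ε = (2:ℝ) ^ (-(i:ℝ)) := by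
    rw [hεdef, ← Real.rpow_intCast 2 (-(i:ℤ))]
    norm_num
  have hBε : B * ε = M * ρ := by
    rw [hBdef, hρdef, hεrpow, mul_assoc, ← Real.rpow_add (by norm_num)]
    congr 2
    ring
  set N : ℕ := 2 * (⌈B⌉).toNat + 1 with hNdef
  -- fiber bound
  have hfib : ∀ b ∈ Sf.image F₁, (Sf.filter (fun r => F₁ r = b)).card ≤ N := by
    intro b hb
    obtain ⟨r0, hr0, hr0b⟩ := Finset.mem_image.mp hb
    have hr0S : r0 ∈ S := (hmemSf r0).mp hr0
    set fb := Sf.filter (fun r => F₁ r = b) with hfbdef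
    have hfbmem : ∀ r ∈ fb, r ∈ S ∧ F₁ r = b := by
      intro r hr
      obtain ⟨h1, h2⟩ := Finset.mem_filter.mp hr
      exact ⟨(hmemSf r).mp h1, h2⟩
    -- corners of fiber members agree with r0's corner
    have hcorfib : ∀ r ∈ fb, T.corner r = T.corner r0 := by
      intro r hr
      obtain ⟨hrS, hrb⟩ := hfbmem r hr
      funext j
      obtain ⟨m, hm, -⟩ := hcornrep r hrS j
      obtain ⟨m0, hm0, -⟩ := hcornrep r0 hr0S j
      have e1 := hF₁val r hrS j m hm
      have e2 := hF₁val r0 hr0S j m0 hm0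
      have : (m:ℤ) = (m0:ℤ) := by rw [← e1, ← e2, hrb, hr0b]
      have : (m:ℝ) = (m0:ℝ) := by exact_mod_cast this
      rw [hm, hm0, this]
    -- height spread
    have hspread : ∀ r ∈ fb, F₂ r ∈ Finset.Icc (F₂ r0 - ⌈B⌉) (F₂ r0 + ⌈B⌉) := by
      intro r hr
      obtain ⟨hrS, -⟩ := hfbmem r hr
      obtain ⟨m, hm, -⟩ := hhtrep r hrS
      obtain ⟨m0, hm0, -⟩ := hhtrep r0 hr0S
      have e1 := hF₂val r m hm
      have e2 := hF₂val r0 m0 hm0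
      have hd1 : T.height r - T.height r0 ≤ M * ρ := by
        rw [hρdef]
        exact WhitneyAux.height_pair α K hα hα1 hK hφH hφub T i r0 r hr0S.2 hrS.2
          (hcorfib r hr).symm
      have hd2 : T.height r0 - T.height r ≤ M * ρ := by
        rw [hρdef]
        exact WhitneyAux.height_pair α K hα hα1 hK hφH hφub T i r r0 hrS.2 hr0S.2
          (hcorfib r hr)
      have habs : |(m:ℝ) - (m0:ℝ)| * ε ≤ M * ρ := by
        rw [← abs_of_pos hε, ← abs_mul, sub_mul, ← hm, ← hm0]
        rw [abs_sub_le_iff]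
        exact ⟨hd1, hd2⟩
      rw [← hBε] at habs
      have habs2 : |(m:ℝ) - (m0:ℝ)| ≤ B := le_of_mul_le_mul_right habs hε
      have habs3 : |m - m0| ≤ ⌈B⌉ := by
        have : ((|m - m0| : ℤ) : ℝ) ≤ (⌈B⌉ : ℝ) := by
          push_cast
          exact le_trans habs2 (Int.le_ceil B)
        exact_mod_cast this
      rw [Finset.mem_Icc, e1, e2]
      rw [abs_le] at habs3
      omega
    -- injectivity of F₂ on the fiber
    have hinj2 : Set.InjOn F₂ ↑fb := by
      intro r hr r' hr' he
      obtain ⟨hrS, hrb⟩ := hfbmem r hr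
      obtain ⟨hrS', hrb'⟩ := hfbmem r' hr'
      exact hinj hrS hrS' (by rw [Prod.mk.injEq]; exact ⟨hrb.trans hrb'.symm, he⟩)
    calc fb.card = (fb.image F₂).card := (Finset.card_image_of_injOn hinj2).symm
      _ ≤ (Finset.Icc (F₂ r0 - ⌈B⌉) (F₂ r0 + ⌈B⌉)).card := by
          apply Finset.card_le_card
          intro v hv
          obtain ⟨r, hr, rfl⟩ := Finset.mem_image.mp hv
          exact hspread r hr
      _ ≤ N := by
          rw [Int.card_Icc, hNdef]
          have hc0 : 0 ≤ ⌈B⌉ := Int.ceil_nonneg hB.le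
          omega
  have h1 : Sf.card ≤ N * (Sf.image F₁).card := Finset.card_le_mul_card_image Sf N hfib
  have h2 : (Sf.image F₁).card ≤ 2^((i-k)*(n-1)) := by
    have hsub : Sf.image F₁ ⊆
        Fintype.piFinset (fun _ : Fin (n-1) => Finset.Icc (0:ℤ) (2^(i-k)-1)) := by
      intro b hb
      obtain ⟨r, hr, rfl⟩ := Finset.mem_image.mp hb
      have hrS : r ∈ S := (hmemSf r).mp hr
      rw [Fintype.mem_piFinset]
      intro j
      obtain ⟨m, hm, hub⟩ := hcornrep r hrS j
      rw [hF₁val r hrS j m hm, Finset.mem_Icc]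
      exact ⟨by positivity, hub⟩
    calc (Sf.image F₁).card ≤ _ := Finset.card_le_card hsub
      _ = 2^((i-k)*(n-1)) := by
          rw [Fintype.card_piFinset]
          simp only [Int.card_Icc]
          rw [Finset.prod_const]
          have : ((2:ℤ)^(i-k) - 1 + 1 - 0).toNat = 2^(i-k) := by
            have h : ((2:ℤ)^(i-k) - 1 + 1 - 0) = ((2^(i-k) : ℕ) : ℤ) := by push_cast; ring
            rw [h, Int.toNat_natCast]
          rw [this, Finset.card_univ, Fintype.card_fin, ← pow_mul]
  have hcard : Sf.card ≤ N * 2^((i-k)*(n-1)) := le_trans h1 (Nat.mul_le_mul_left N h2)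
  -- transfer to reals
  have hNreal : (N:ℝ) ≤ 2*B + 3 := by
    have hc0 : 0 ≤ ⌈B⌉ := Int.ceil_nonneg hB.le
    have : ((⌈B⌉.toNat : ℤ) : ℝ) ≤ B + 1 := by
      rw [Int.toNat_of_nonneg hc0]
      linarith [Int.ceil_lt_add_one B]
    rw [hNdef]
    push_cast at this ⊢
    linarith
  have hP : ((2^((i-k)*(n-1)) : ℕ) : ℝ) = (2:ℝ) ^ ((((i-k)*(n-1):ℕ)) : ℝ) := by
    rw [Real.rpow_natCast]
    push_cast
    ring
  have hβ1 : (1:ℝ) ≤ (2:ℝ)^((i:ℝ) * (1-α)) := by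
    rw [show (1:ℝ) = (2:ℝ)^(0:ℝ) by rw [Real.rpow_zero]]
    apply Real.rpow_le_rpow_of_exponent_le one_le_two
    have : (0:ℝ) ≤ (i:ℝ) := Nat.cast_nonneg i
    nlinarith
  have hkey : (2:ℝ) ^ (-(k:ℝ) * ((n:ℝ) - 1)) * (2:ℝ) ^ (-(i:ℝ) * (α - (n:ℝ))) =
      (2:ℝ)^((i:ℝ) * (1-α)) * (2:ℝ) ^ ((((i-k)*(n-1):ℕ)) : ℝ) := by
    rw [← Real.rpow_add (by norm_num), ← Real.rpow_add (by norm_num)]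
    congr 1
    push_cast [Nat.cast_sub hki, Nat.cast_sub (show 1 ≤ n by omega)]
    ring
  have hfinal : (S.ncard : ℝ) = Sf.card := by
    rw [Set.ncard_eq_toFinset_card S hSfin]
  rw [hfinal]
  calc (Sf.card : ℝ) ≤ (N : ℝ) * ((2^((i-k)*(n-1)) : ℕ) : ℝ) := by exact_mod_cast hcard
    _ ≤ (2*B + 3) * (2:ℝ) ^ ((((i-k)*(n-1):ℕ)) : ℝ) := by
        rw [hP]
        apply mul_le_mul_of_nonneg_right hNreal (Real.rpow_nonneg (by norm_num) _)
    _ ≤ (2*M + 3) * ((2:ℝ)^((i:ℝ) * (1-α)) * (2:ℝ) ^ ((((i-k)*(n-1):ℕ)) : ℝ)) := by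
        have hPpos : (0:ℝ) < (2:ℝ) ^ ((((i-k)*(n-1):ℕ)) : ℝ) :=
          Real.rpow_pos_of_pos (by norm_num) _
        rw [hBdef]
        nlinarith [mul_nonneg hPpos.le (sub_nonneg.mpr hβ1)]
    _ = (2*M + 3) * (2:ℝ) ^ (-(k:ℝ) * ((n:ℝ) - 1)) * (2:ℝ) ^ (-(i:ℝ) * (α - (n:ℝ))) := by
        rw [← hkey]
        ring

end
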